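/- arXiv:1702.07545 — 2 statements merged into one kernel-verified Lean document; each statement's English description precedes it below -/
import Mathlib

section
/- If Q is Hermitian positive semidefinite with diagonal entries p_i > 0 and off-diagonal entries satisfying |q_{ij}| = √(p_i p_j) for all i ≠ j, then Q has rank one and Q = w wᴴ where w_i = √(p_i) e^{i φ_i} with φ_i = arg(q_{i1}) (taking φ_1 = 0). -/
open ComplexOrder

open Matrix

theorem stmt5 {n : ℕ} (Q : Matrix (Fin (n + 1)) (Fin (n + 1)) ℂ) (hQ : Q.PosSemidef)
    (p : Fin (n + 1) → ℝ) (hp : ∀ i, 0 < p i) (hdiag : ∀ i, Q i i = (p i : ℂ))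
    (hoff : ∀ i j, i ≠ j → ‖Q i j‖ = Real.sqrt (p i * p j)) :
    Q.rank = 1 ∧
      Q = Matrix.vecMulVec
        (fun i => (Real.sqrt (p i) : ℂ) * Complex.exp (Complex.I * (Q i 0).arg))
        (star fun i => (Real.sqrt (p i) : ℂ) * Complex.exp (Complex.I * (Q i 0).arg)) := by
  have hherm := hQ.1
  have hsym : ∀ i j, Q j i = starRingEnd ℂ (Q i j) := fun i j => (hherm.apply j i).symm
  -- |Q i 0| = √(p i * p 0) for all i
  have habs : ∀ i, ‖Q i 0‖ = Real.sqrt (p i * p 0) := by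
    intro i
    by_cases hi : i = 0
    · subst hi
      rw [hdiag 0, Complex.norm_real, Real.norm_eq_abs, abs_of_pos (hp 0),
        Real.sqrt_mul_self (hp 0).le]
    · exact hoff i 0 hi
  have hQ00 : ∀ i, Q i 0 * Q 0 i = ((p i * p 0 : ℝ) : ℂ) := by
    intro i
    rw [hsym i 0, mul_comm, ← Complex.normSq_eq_conj_mul_self, Complex.normSq_eq_norm_sq, habs i]
    norm_cast
    exact Real.sq_sqrt (mul_nonneg (hp i).le (hp 0).le)
  -- key identity
  have key : ∀ i j, Q j i * (p 0 : ℂ) = Q j 0 * Q 0 i := by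
    intro i j
    set x : Fin (n + 1) → ℂ :=
      (p 0 : ℂ) • (Pi.single i 1 : Fin (n + 1) → ℂ)
        - (Q 0 i) • (Pi.single 0 1 : Fin (n + 1) → ℂ) with hx
    have hQx : Q *ᵥ x = fun k => (p 0 : ℂ) * Q k i - Q 0 i * Q k 0 := by
      funext k
      simp [hx, mulVec_sub, mulVec_smul, mulVec_single, mul_comm]
    have h0 : star x ⬝ᵥ Q *ᵥ x = 0 := by
      rw [hQx, hx]
      have hs : star ((p 0 : ℂ) • (Pi.single i 1 : Fin (n + 1) → ℂ)
            - (Q 0 i) • (Pi.single 0 1 : Fin (n + 1) → ℂ))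
          = (p 0 : ℂ) • (Pi.single i 1 : Fin (n + 1) → ℂ)
            - (starRingEnd ℂ (Q 0 i)) • (Pi.single 0 1 : Fin (n + 1) → ℂ) := by
        have hsing : ∀ (a k : Fin (n + 1)), star ((Pi.single a 1 : Fin (n + 1) → ℂ) k)
            = (Pi.single a 1 : Fin (n + 1) → ℂ) k := by
          intro a k
          rcases eq_or_ne k a with h | h
          · subst h; simp
          · simp [Pi.single_eq_of_ne h]
        funext k
        simp only [Pi.star_apply, Pi.sub_apply, Pi.smul_apply, smul_eq_mul, star_sub,
          star_mul', hsing, Complex.star_def, Complex.conj_ofReal]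
        try ring
      rw [hs, sub_dotProduct, smul_dotProduct, smul_dotProduct, single_dotProduct,
        single_dotProduct]
      have e2 := hQ00 i
      have e1 : Q 0 i * Q i 0 = ((p i * p 0 : ℝ) : ℂ) := by rw [mul_comm]; exact e2
      simp only [smul_eq_mul, one_mul, hdiag 0, hdiag i]
      push_cast at e1 ⊢
      linear_combination (-(p 0 : ℂ)) * e1
    have hker : Q *ᵥ x = 0 := (hQ.dotProduct_mulVec_zero_iff x).mp h0
    have hj := congrFun hker j
    rw [hQx] at hj
    simp only [Pi.zero_apply] at hj
    linear_combination hj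
  -- entrywise formula
  set w : Fin (n + 1) → ℂ :=
    fun i => (Real.sqrt (p i) : ℂ) * Complex.exp (Complex.I * (Q i 0).arg) with hw
  have hQeq : Q = Matrix.vecMulVec w (star w) := by
    funext j i
    have hp0 : (p 0 : ℂ) ≠ 0 := by exact_mod_cast (hp 0).ne'
    have hQj0 : Q j 0
        = ((Real.sqrt (p j) : ℂ) * (Real.sqrt (p 0) : ℂ)) * Complex.exp (Complex.I * (Q j 0).arg) := by
      conv_lhs => rw [← Complex.norm_mul_exp_arg_mul_I (Q j 0)]
      rw [habs j, Real.sqrt_mul (hp j).le]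
      push_cast
      ring_nf
    have hconjarg : ∀ a : Fin (n + 1),
        starRingEnd ℂ (Complex.I * ((Q a 0).arg : ℂ)) = -(Complex.I * ((Q a 0).arg : ℂ)) := by
      intro a
      rw [_root_.map_mul, Complex.conj_I, Complex.conj_ofReal]
      ring
    have hQ0i : Q 0 i
        = ((Real.sqrt (p i) : ℂ) * (Real.sqrt (p 0) : ℂ)) * Complex.exp (-(Complex.I * (Q i 0).arg)) := by
      rw [hsym i 0]
      conv_lhs => rw [← Complex.norm_mul_exp_arg_mul_I (Q i 0)]
      rw [_root_.map_mul, Complex.conj_ofReal, ← Complex.exp_conj, habs i,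
        Real.sqrt_mul (hp i).le]
      have : starRingEnd ℂ (((Q i 0).arg : ℂ) * Complex.I) = -(Complex.I * ((Q i 0).arg : ℂ)) := by
        rw [_root_.map_mul, Complex.conj_I, Complex.conj_ofReal]; ring
      rw [this]
      push_cast
      ring_nf
    have hstarw : star (w i) = (Real.sqrt (p i) : ℂ) * Complex.exp (-(Complex.I * (Q i 0).arg)) := by
      rw [hw]
      simp only [star_mul', Complex.star_def, ← Complex.exp_conj, Complex.conj_ofReal, hconjarg i]
    have hkey := key i j
    rw [hQj0, hQ0i] at hkey
    have hroot : (Real.sqrt (p 0) : ℂ) * (Real.sqrt (p 0) : ℂ) = (p 0 : ℂ) := by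
      rw [← Complex.ofReal_mul, Real.mul_self_sqrt (hp 0).le]
    have hmain : Q j i * (p 0 : ℂ) = (w j * star (w i)) * (p 0 : ℂ) := by
      rw [hkey, hstarw, hw]
      linear_combination ((Real.sqrt (p j) : ℂ) * Complex.exp (Complex.I * (Q j 0).arg)
        * (Real.sqrt (p i) : ℂ) * Complex.exp (-(Complex.I * (Q i 0).arg))) * hroot
    have := mul_right_cancel₀ hp0 hmain
    simpa [vecMulVec_apply] using this
  refine ⟨?_, hQeq⟩
  -- rank
  have hle : Q.rank ≤ 1 := by
    rw [hQeq, vecMulVec_eq (Fin 1)]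
    calc (replicateCol (Fin 1) w * replicateRow (Fin 1) (star w)).rank
        ≤ (replicateCol (Fin 1) w).rank := rank_mul_le_left _ _
      _ ≤ 1 := by simpa using rank_le_card_width (replicateCol (Fin 1) w)
  have hne : Q.rank ≠ 0 := by
    intro h
    have hQ0 : Q ≠ 0 := by
      intro hz
      have h00 := hdiag 0
      rw [hz] at h00
      simp only [Matrix.zero_apply] at h00
      have : p 0 = 0 := by exact_mod_cast h00.symm
      exact (hp 0).ne' this
    have hbot : LinearMap.range Q.mulVecLin = ⊥ := by
      rw [Matrix.rank] at h
      exact Submodule.finrank_eq_zero.mp h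
    apply hQ0
    have hmv : ∀ x, Q *ᵥ x = 0 := by
      intro x
      have h2 : Q.mulVecLin x ∈ (⊥ : Submodule ℂ (Fin (n + 1) → ℂ)) :=
        hbot ▸ LinearMap.mem_range_self _ x
      simpa using h2
    funext a b
    have := congrFun (hmv (Pi.single b 1)) a
    simpa [mulVec_single] using this
  omega
end

section
/- Over the feasible set {Q Hermitian, Q ⪰ 0, Q_{ii} ≤ p_i for all i}, any maximizer Q* of tr(H Q Hᴴ) with H having no zero column satisfies Q*_{ii} = p_i for all i; equivalently, if Q_{jj} < p_j for some j with (HᴴH)_{jj} > 0, then Q is not a maximizer. -/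
open ComplexOrder
open Matrix

theorem stmt10 {K N : ℕ} (H : Matrix (Fin K) (Fin N) ℂ) (p : Fin N → ℝ) (hp : ∀ i, 0 < p i)
    (hH : ∀ j, 0 < ((Hᴴ * H) j j).re)
    (Q : Matrix (Fin N) (Fin N) ℂ) (hQ : Q.PosSemidef) (hfeas : ∀ i, (Q i i).re ≤ p i)
    (j : Fin N) (hj : (Q j j).re < p j) :
    ∃ Q' : Matrix (Fin N) (Fin N) ℂ, Q'.PosSemidef ∧ (∀ i, (Q' i i).re ≤ p i) ∧
      ((H * Q * Hᴴ).trace).re < ((H * Q' * Hᴴ).trace).re := by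
  set ε : ℝ := p j - (Q j j).re with hε
  have hεpos : 0 < ε := by simp [hε]; linarith
  set E : Matrix (Fin N) (Fin N) ℂ := Matrix.single j j (ε : ℂ) with hE
  have hEpsd : E.PosSemidef := by
    refine Matrix.PosSemidef.of_dotProduct_mulVec_nonneg ?_ ?_
    · ext a b
      by_cases h1 : j = a <;> by_cases h2 : j = b <;>
        simp [hE, Matrix.single, Matrix.conjTranspose_apply, h1, h2] <;>
        split <;> simp
    · intro x
      have : star x ⬝ᵥ (E *ᵥ x) = (ε : ℂ) * (star (x j) * x j) := by
        rw [hE, Matrix.single_mulVec]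
        simp [dotProduct, Function.update, Finset.sum_ite_eq]
        ring
      rw [this]
      have h1 : (0:ℂ) ≤ (ε:ℂ) := by exact_mod_cast hεpos.le
      exact mul_nonneg h1 (star_mul_self_nonneg _)
  refine ⟨Q + E, hQ.add hEpsd, ?_, ?_⟩
  · intro i
    by_cases hij : i = j
    · subst hij
      simp [hE, Matrix.single, hε]
    · simpa [hE, Matrix.single, Ne.symm hij] using hfeas i
  · have hexp : H * (Q + E) * Hᴴ = H * Q * Hᴴ + H * E * Hᴴ := by
      rw [Matrix.mul_add, Matrix.add_mul]
    rw [hexp, Matrix.trace_add]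
    have htr : (H * E * Hᴴ).trace = (ε : ℂ) * ((Hᴴ * H) j j) := by
      simp [Matrix.trace, Matrix.mul_apply, Matrix.diag, hE, Matrix.single,
        Matrix.conjTranspose_apply, Finset.mul_sum]
      simp only [ite_and, ite_mul, zero_mul, Finset.sum_ite_eq, Finset.mem_univ, if_true]
      exact Finset.sum_congr rfl fun k _ => by ring
    have : 0 < ((H * E * Hᴴ).trace).re := by
      rw [htr]
      have := hH j
      have him : ((Hᴴ * H) j j).im = 0 := by
        have := (Matrix.posSemidef_conjTranspose_mul_self H).isHermitian.apply j j
        have h2 := congrArg Complex.im this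
        simp [Complex.conj_im] at h2
        linarith
      simp [Complex.mul_re, him]
      positivity
    simp only [Complex.add_re]
    linarith
end
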